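/- Let n be a positive integer, λ = (p_1,…,p_k) a partition of n, and let f : {1,…,n} → {1,…,k} be the map with f(s) = i exactly when p_1+⋯+p_{i−1} < s ≤ p_1+⋯+p_i. Let G = {φ ∈ S_n : f∘φ = f}. Work over the polynomial ring R_k = ℤ[q_{a,b} : a,b ∈ {1,…,k}], and let M be the free R_k-module with basis (e_σ)_{σ ∈ S_n}. Define the R_k-linear map γ_f : M → M by γ_f(e_τ) = Σ_{σ ∈ S_n} v_f(τ,σ) e_σ, where v_f(τ,σ) := ∏ q_{f(τ(i)),f(τ(j))}, the product over pairs (i,j) with 1 ≤ i < j ≤ n and σ⁻¹(τ(i)) > σ⁻¹(τ(j)). Let N ⊆ M be the R_k-submodule spanned by the elements Σ_{φ ∈ G} e_{φ∘σ}, one for each σ ∈ S_n. Then γ_f(N) ⊆ N; more precisely, for every τ ∈ S_n, γ_f(Σ_{φ∈G} e_{φτ}) = Σ_{cosets Gσ} c(τ,σ) · (Σ_{φ∈G} e_{φσ}) where c(τ,σ) = Σ_{ψ∈G} v_f(ψτ, σ). -/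

import Mathlib

/-- The polynomial ring `R_k = ℤ[q_{a,b} : a,b ∈ {1,…,k}]`. -/
abbrev Rk (k : ℕ) : Type := MvPolynomial (Fin k × Fin k) ℤ

/-- `v_f(τ,σ)`: the product of `q_{f(τ(i)),f(τ(j))}` over the pairs `i < j`
with `σ⁻¹(τ(i)) > σ⁻¹(τ(j))`. -/
noncomputable def vf {n k : ℕ} (f : Fin n → Fin k) (τ σ : Equiv.Perm (Fin n)) :
    Rk k :=
  ∏ p ∈ Finset.univ.filter
      (fun p : Fin n × Fin n => p.1 < p.2 ∧ σ⁻¹ (τ p.2) < σ⁻¹ (τ p.1)),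
    MvPolynomial.X (f (τ p.1), f (τ p.2))

/-- The Young subgroup `G = {φ ∈ S_n : f ∘ φ = f}` (as a finset). -/
def youngG {n k : ℕ} (f : Fin n → Fin k) : Finset (Equiv.Perm (Fin n)) :=
  Finset.univ.filter fun φ => f ∘ ⇑φ = f

/-- The basis vector `e_σ` of the free module `M = R_k^{S_n}`. -/
noncomputable def eBasis {n k : ℕ} (σ : Equiv.Perm (Fin n)) :
    Equiv.Perm (Fin n) → Rk k :=
  fun ρ => if ρ = σ then 1 else 0

/-- The linear operator `γ_f` with `γ_f(e_τ) = Σ_σ v_f(τ,σ) e_σ`. -/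
noncomputable def gammaF {n k : ℕ} (f : Fin n → Fin k)
    (x : Equiv.Perm (Fin n) → Rk k) : Equiv.Perm (Fin n) → Rk k :=
  fun σ => ∑ τ : Equiv.Perm (Fin n), vf f τ σ * x τ

/-- The submodule `N` spanned by the coset sums `Σ_{φ∈G} e_{φσ}`, `σ ∈ S_n`. -/
noncomputable def cosetSubmodule {n k : ℕ} (f : Fin n → Fin k) :
    Submodule (Rk k) (Equiv.Perm (Fin n) → Rk k) :=
  Submodule.span (Rk k)
    {g | ∃ σ : Equiv.Perm (Fin n), g = ∑ φ ∈ youngG f, eBasis (k := k) (φ * σ)}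

lemma mem_youngG {n k : ℕ} {f : Fin n → Fin k} {φ : Equiv.Perm (Fin n)} :
    φ ∈ youngG f ↔ f ∘ ⇑φ = f := by simp [youngG]

lemma youngG_apply {n k : ℕ} {f : Fin n → Fin k} {φ : Equiv.Perm (Fin n)}
    (h : φ ∈ youngG f) (x : Fin n) : f (φ x) = f x :=
  congrFun (mem_youngG.mp h) x

lemma youngG_inv_apply {n k : ℕ} {f : Fin n → Fin k} {φ : Equiv.Perm (Fin n)}
    (h : φ ∈ youngG f) (x : Fin n) : f (φ⁻¹ x) = f x := by
  have := youngG_apply h (φ⁻¹ x)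
  rw [show φ (φ⁻¹ x) = x from φ.apply_symm_apply x] at this; exact this.symm

lemma youngG_mul {n k : ℕ} {f : Fin n → Fin k} {φ ψ : Equiv.Perm (Fin n)}
    (hφ : φ ∈ youngG f) (hψ : ψ ∈ youngG f) : φ * ψ ∈ youngG f := by
  rw [mem_youngG]; funext x
  simp [Equiv.Perm.mul_apply, youngG_apply hφ, youngG_apply hψ]

lemma youngG_inv {n k : ℕ} {f : Fin n → Fin k} {φ : Equiv.Perm (Fin n)}
    (hφ : φ ∈ youngG f) : φ⁻¹ ∈ youngG f := by
  rw [mem_youngG]; funext x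
  exact youngG_inv_apply hφ x

lemma vf_shift {n k : ℕ} {f : Fin n → Fin k} {φ : Equiv.Perm (Fin n)}
    (hφ : φ ∈ youngG f) (τ σ : Equiv.Perm (Fin n)) :
    vf f τ (φ * σ) = vf f (φ⁻¹ * τ) σ := by
  unfold vf
  apply Finset.prod_congr
  · apply Finset.filter_congr
    intro p _
    simp [Equiv.Perm.mul_apply, mul_inv_rev]
  · intro p _
    simp [Equiv.Perm.mul_apply, youngG_inv_apply hφ]
    exact ⟨(youngG_inv_apply hφ _).symm, (youngG_inv_apply hφ _).symm⟩

lemma cosetSum_apply {n k : ℕ} (f : Fin n → Fin k) (t ρ : Equiv.Perm (Fin n)) :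
    (∑ φ ∈ youngG f, eBasis (k := k) (φ * t)) ρ
      = if ρ * t⁻¹ ∈ youngG f then 1 else 0 := by
  simp only [Finset.sum_apply, eBasis]
  have h : ∀ φ : Equiv.Perm (Fin n), (ρ = φ * t) ↔ (φ = ρ * t⁻¹) := by
    intro φ; constructor <;> intro h <;> [skip; skip] <;> subst h <;> group
  rw [Finset.sum_congr rfl fun φ _ => by rw [if_congr (h φ) rfl rfl]]
  simp [Finset.sum_ite_eq']

lemma cosetSum_apply' {n k : ℕ} (f : Fin n → Fin k) (t ρ : Equiv.Perm (Fin n)) :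
    (∑ φ ∈ youngG f, eBasis (k := k) (φ * t) ρ)
      = if ρ * t⁻¹ ∈ youngG f then 1 else 0 := by
  rw [← cosetSum_apply f t ρ, Finset.sum_apply]

lemma gammaF_part2 {n k : ℕ} (f : Fin n → Fin k)
    (T : Finset (Equiv.Perm (Fin n)))
    (hT : ∀ σ : Equiv.Perm (Fin n), ∃! t, t ∈ T ∧ σ * t⁻¹ ∈ youngG f)
    (τ : Equiv.Perm (Fin n)) :
    gammaF f (∑ φ ∈ youngG f, eBasis (k := k) (φ * τ)) =
      ∑ t ∈ T, (∑ ψ ∈ youngG f, vf f (ψ * τ) t) •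
        (∑ φ ∈ youngG f, eBasis (k := k) (φ * t)) := by
  funext ρ
  obtain ⟨t₀, ⟨ht₀T, ht₀G⟩, huniq⟩ := hT ρ
  have hR : (∑ t ∈ T, (∑ ψ ∈ youngG f, vf f (ψ * τ) t) •
        (∑ φ ∈ youngG f, eBasis (k := k) (φ * t))) ρ
      = ∑ ψ ∈ youngG f, vf f (ψ * τ) t₀ := by
    simp only [Finset.sum_apply, Pi.smul_apply, smul_eq_mul, cosetSum_apply']
    rw [Finset.sum_eq_single t₀]
    · rw [if_pos ht₀G, mul_one]
    · intro t htT htne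
      rw [if_neg, mul_zero]
      intro hG
      exact htne (huniq t ⟨htT, hG⟩)
    · intro h; exact absurd ht₀T h
  rw [hR]
  have hL : gammaF f (∑ φ ∈ youngG f, eBasis (k := k) (φ * τ)) ρ
      = ∑ φ ∈ youngG f, vf f (φ * τ) ρ := by
    simp only [gammaF, Finset.sum_apply, eBasis, Finset.mul_sum, mul_ite,
      mul_one, mul_zero]
    rw [Finset.sum_comm]
    refine Finset.sum_congr rfl fun φ _ => ?_
    simp [Finset.sum_ite_eq']
  rw [hL]
  -- reindex: ρ = φ₀ * t₀ with φ₀ = ρ * t₀⁻¹ ∈ G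
  have hρ : ρ = (ρ * t₀⁻¹) * t₀ := by group
  refine Finset.sum_nbij' (fun φ => (ρ * t₀⁻¹)⁻¹ * φ) (fun ψ => (ρ * t₀⁻¹) * ψ)
    (fun φ hφ => youngG_mul (youngG_inv ht₀G) hφ)
    (fun ψ hψ => youngG_mul ht₀G hψ)
    (fun φ _ => by group) (fun ψ _ => by group)
    (fun φ hφ => ?_)
  conv_lhs => rw [hρ, vf_shift ht₀G, ← mul_assoc]

lemma gammaF_add {n k : ℕ} (f : Fin n → Fin k)
    (x y : Equiv.Perm (Fin n) → Rk k) :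
    gammaF f (x + y) = gammaF f x + gammaF f y := by
  funext σ
  simp [gammaF, mul_add, Finset.sum_add_distrib]

lemma gammaF_smul {n k : ℕ} (f : Fin n → Fin k) (c : Rk k)
    (x : Equiv.Perm (Fin n) → Rk k) :
    gammaF f (c • x) = c • gammaF f x := by
  funext σ
  simp [gammaF, Finset.mul_sum, mul_left_comm]

lemma gammaF_zero {n k : ℕ} (f : Fin n → Fin k) :
    gammaF f (0 : Equiv.Perm (Fin n) → Rk k) = 0 := by
  funext σ; simp [gammaF]

theorem gammaF_maps_cosetSubmodule (n k : ℕ) (hn : 0 < n)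
    (p : Fin k → ℕ) (hpos : ∀ i, 0 < p i)
    (hmono : ∀ i j : Fin k, i ≤ j → p j ≤ p i) (hsum : ∑ i, p i = n)
    (f : Fin n → Fin k)
    (hf : ∀ (s : Fin n) (i : Fin k),
      f s = i ↔ ∑ j ∈ Finset.Iio i, p j ≤ (s : ℕ) ∧
        (s : ℕ) < ∑ j ∈ Finset.Iic i, p j)
    (T : Finset (Equiv.Perm (Fin n)))
    (hT : ∀ σ : Equiv.Perm (Fin n), ∃! t, t ∈ T ∧ σ * t⁻¹ ∈ youngG f) :
    (∀ x ∈ cosetSubmodule f, gammaF f x ∈ cosetSubmodule f) ∧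
    ∀ τ : Equiv.Perm (Fin n),
      gammaF f (∑ φ ∈ youngG f, eBasis (k := k) (φ * τ)) =
        ∑ t ∈ T, (∑ ψ ∈ youngG f, vf f (ψ * τ) t) •
          (∑ φ ∈ youngG f, eBasis (k := k) (φ * t)) := by
  refine ⟨?_, gammaF_part2 f T hT⟩
  intro x hx
  induction hx using Submodule.span_induction with
  | mem g hg =>
      obtain ⟨σ, rfl⟩ := hg
      rw [gammaF_part2 f T hT]
      exact Submodule.sum_mem _ fun t _ =>
        Submodule.smul_mem _ _ (Submodule.subset_span ⟨t, rfl⟩)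
  | zero => rw [gammaF_zero]; exact Submodule.zero_mem _
  | add x y hx hy ihx ihy => rw [gammaF_add]; exact Submodule.add_mem _ ihx ihy
  | smul c x hx ih => rw [gammaF_smul]; exact Submodule.smul_mem _ _ ih
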